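/- arXiv:2502.11548 — 2 statements merged into one kernel-verified Lean document; each statement's English description precedes it below -/
import Mathlib

section
/- Let p be an odd prime and k an odd prime dividing |PSL_2(F_p)| = (p³−p)/2. Then every k-Sylow subgroup of PSL_2(F_p) is cyclic, and all cyclic subgroups of order k in PSL_2(F_p) are conjugate to each other. -/
/-- `PSL₂(𝔽ₚ)`, the quotient of `SL₂(𝔽ₚ)` by its center `{±I₂}`. -/
abbrev PSL (p : ℕ) :=
  Matrix.SpecialLinearGroup (Fin 2) (ZMod p) ⧸
    Subgroup.center (Matrix.SpecialLinearGroup (Fin 2) (ZMod p))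

open Matrix Subgroup

namespace Stmt11Aux

/-! ### Generic 2×2 matrix computations -/

lemma fin2_ext {α : Type*} {A B : Matrix (Fin 2) (Fin 2) α} (h00 : A 0 0 = B 0 0)
    (h01 : A 0 1 = B 0 1) (h10 : A 1 0 = B 1 0) (h11 : A 1 1 = B 1 1) : A = B := by
  ext i j
  fin_cases i <;> fin_cases j <;> assumption

lemma mul_diag2 {R : Type*} [CommRing R] (x x' y y' : R) :
    (!![x, 0; 0, x'] : Matrix (Fin 2) (Fin 2) R) * !![y, 0; 0, y'] =
      !![x * y, 0; 0, x' * y'] := by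
  apply fin2_ext <;> simp [Matrix.mul_apply, Fin.sum_univ_two]

lemma det_diag2 {R : Type*} [CommRing R] (x y : R) :
    (!![x, 0; 0, y] : Matrix (Fin 2) (Fin 2) R).det = x * y := by
  rw [Matrix.det_fin_two_of]
  ring

lemma mul_unipotent {R : Type*} [CommRing R] (a : R) :
    (!![1, a; 0, 1] : Matrix (Fin 2) (Fin 2) R) * !![1, 1; 0, 1] = !![1, a + 1; 0, 1] := by
  apply fin2_ext <;> simp [Matrix.mul_apply, Fin.sum_univ_two] <;> ring

variable (p : ℕ) [Fact p.Prime]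

local notation "SL2" => Matrix.SpecialLinearGroup (Fin 2) (ZMod p)

/-! ### Cardinality of `SL₂(𝔽ₚ)` -/

lemma det_surjective :
    Function.Surjective (Matrix.GeneralLinearGroup.det (n := Fin 2) (R := ZMod p)) := by
  intro r
  have hrr : (r : ZMod p) * ((r⁻¹ : (ZMod p)ˣ) : ZMod p) = 1 := by
    rw [← Units.val_mul, mul_inv_cancel, Units.val_one]
  have hrr' : ((r⁻¹ : (ZMod p)ˣ) : ZMod p) * (r : ZMod p) = 1 := by
    rw [← Units.val_mul, inv_mul_cancel, Units.val_one]
  have hval : (!![(r : ZMod p), 0; 0, 1] : Matrix (Fin 2) (Fin 2) (ZMod p)) *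
      !![((r⁻¹ : (ZMod p)ˣ) : ZMod p), 0; 0, 1] = 1 := by
    rw [mul_diag2, hrr, mul_one, Matrix.one_fin_two]
  have hval' : (!![((r⁻¹ : (ZMod p)ˣ) : ZMod p), 0; 0, 1] : Matrix (Fin 2) (Fin 2) (ZMod p)) *
      !![(r : ZMod p), 0; 0, 1] = 1 := by
    rw [mul_diag2, hrr', mul_one, Matrix.one_fin_two]
  refine ⟨⟨!![(r : ZMod p), 0; 0, 1], !![((r⁻¹ : (ZMod p)ˣ) : ZMod p), 0; 0, 1],
    hval, hval'⟩, ?_⟩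
  apply Units.ext
  rw [Matrix.GeneralLinearGroup.val_det_apply]
  show (!![(r : ZMod p), 0; 0, 1] : Matrix (Fin 2) (Fin 2) (ZMod p)).det = r
  rw [det_diag2, mul_one]

/-- `SL₂` is equivalent to the kernel of `det : GL₂ → 𝔽ₚˣ`. -/
noncomputable def slEquivKer :
    SL2 ≃ (MonoidHom.ker (Matrix.GeneralLinearGroup.det (n := Fin 2) (R := ZMod p))) where
  toFun A := ⟨Matrix.SpecialLinearGroup.toGL A, by
    rw [MonoidHom.mem_ker]
    apply Units.ext
    rw [Matrix.GeneralLinearGroup.val_det_apply]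
    exact A.2⟩
  invFun u := ⟨(u : GL (Fin 2) (ZMod p)), by
    have h := u.2
    rw [MonoidHom.mem_ker] at h
    have h2 := congrArg Units.val h
    rwa [Matrix.GeneralLinearGroup.val_det_apply] at h2⟩
  left_inv A := rfl
  right_inv u := Subtype.ext (Units.ext rfl)

lemma card_SL2 : Nat.card SL2 = p * (p ^ 2 - 1) := by
  have hp2 : 2 ≤ p := (Fact.out : p.Prime).two_le
  have hGL : Nat.card (GL (Fin 2) (ZMod p)) = (p ^ 2 - 1) * (p ^ 2 - p) := by
    have h := Matrix.card_GL_field (𝔽 := ZMod p) 2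
    rw [ZMod.card] at h
    rw [h, Fin.prod_univ_two]
    norm_num
  have hker : Nat.card (GL (Fin 2) (ZMod p)) =
      (p - 1) * Nat.card (MonoidHom.ker (Matrix.GeneralLinearGroup.det (n := Fin 2) (R := ZMod p))) := by
    rw [Subgroup.card_eq_card_quotient_mul_card_subgroup
      (MonoidHom.ker (Matrix.GeneralLinearGroup.det (n := Fin 2) (R := ZMod p)))]
    congr 1
    rw [Nat.card_congr (QuotientGroup.quotientKerEquivOfSurjective _ (det_surjective p)).toEquiv]
    rw [Nat.card_eq_fintype_card, ZMod.card_units_eq_totient, Nat.totient_prime Fact.out]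
  have hSL : Nat.card SL2 =
      Nat.card (MonoidHom.ker (Matrix.GeneralLinearGroup.det (n := Fin 2) (R := ZMod p))) :=
    Nat.card_congr (slEquivKer p)
  have key : Nat.card SL2 * (p - 1) = (p * (p ^ 2 - 1)) * (p - 1) := by
    calc Nat.card SL2 * (p - 1)
        = (p - 1) * Nat.card (MonoidHom.ker
            (Matrix.GeneralLinearGroup.det (n := Fin 2) (R := ZMod p))) := by
          rw [hSL, mul_comm]
      _ = (p ^ 2 - 1) * (p ^ 2 - p) := by rw [← hker, hGL]
      _ = (p * (p ^ 2 - 1)) * (p - 1) := by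
          have h1 : p ^ 2 - p = p * (p - 1) := by
            rw [Nat.mul_sub, mul_one, ← sq]
          rw [h1]
          ring
  have hpos : 0 < p - 1 := by omega
  exact Nat.eq_of_mul_eq_mul_right hpos key

lemma card_PSL_dvd : Nat.card (PSL p) ∣ p * (p ^ 2 - 1) := by
  rw [← card_SL2 p]
  exact ⟨Nat.card (Subgroup.center SL2),
    Subgroup.card_eq_card_quotient_mul_card_subgroup (Subgroup.center SL2)⟩

/-! ### Orders in the quotient -/

/-- An element of odd order in `SL₂` maps to an element of the same order in `PSL`. -/
lemma orderOf_mk_of_odd (y : SL2) (hodd : Odd (orderOf y)) :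
    orderOf (QuotientGroup.mk' (Subgroup.center SL2) y) = orderOf y := by
  set n := orderOf y with hn
  set m := orderOf (QuotientGroup.mk' (Subgroup.center SL2) y) with hm
  have hn0 : n ≠ 0 := by
    have : 0 < orderOf y := orderOf_pos y
    omega
  have hdvd : m ∣ n := orderOf_map_dvd _ y
  have hym : y ^ m ∈ Subgroup.center SL2 := by
    rw [← QuotientGroup.eq_one_iff (N := Subgroup.center SL2)]
    show (QuotientGroup.mk' (Subgroup.center SL2)) (y ^ m) = 1
    rw [map_pow]
    exact pow_orderOf_eq_one _
  obtain ⟨r, hr2, hry⟩ := Matrix.SpecialLinearGroup.mem_center_iff.mp hym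
  simp only [Fintype.card_fin] at hr2
  have hsq : (y ^ m) ^ 2 = 1 := by
    apply Subtype.ext
    rw [Matrix.SpecialLinearGroup.coe_pow, ← hry, ← map_pow, hr2, _root_.map_one,
      Matrix.SpecialLinearGroup.coe_one]
  have hdvd2 : orderOf (y ^ m) ∣ 2 := orderOf_dvd_of_pow_eq_one hsq
  have hm0 : m ≠ 0 := by
    intro h
    rw [h] at hdvd
    exact hn0 (Nat.eq_zero_of_zero_dvd hdvd)
  have hord : orderOf (y ^ m) = n / m := by
    rw [orderOf_pow' y hm0, ← hn, Nat.gcd_eq_right hdvd]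
  rw [hord] at hdvd2
  have h1 : n / m = 1 := by
    have hnd : n / m ∣ n := Nat.div_dvd_of_dvd hdvd
    have hno : n % 2 = 1 := Nat.odd_iff.mp hodd
    rcases (Nat.dvd_prime Nat.prime_two).mp hdvd2 with h | h
    · exact h
    · exfalso
      rw [h] at hnd
      omega
  have hmn := Nat.div_mul_cancel hdvd
  rw [h1, one_mul] at hmn
  exact hmn

/-! ### An element of order `p` -/

lemma exists_orderOf_eq_p (hp : Odd p) : ∃ g : PSL p, orderOf g = p := by
  have hp2 : p ≠ 2 := by
    rintro rfl
    rw [Nat.odd_iff] at hp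
    omega
  have hdet : (!![1, 1; 0, 1] : Matrix (Fin 2) (Fin 2) (ZMod p)).det = 1 := by
    rw [Matrix.det_fin_two_of]; ring
  set u : SL2 := ⟨!![1, 1; 0, 1], hdet⟩ with hu
  have hpow : ∀ n : ℕ, ((u ^ n : SL2) : Matrix (Fin 2) (Fin 2) (ZMod p)) =
      !![1, (n : ZMod p); 0, 1] := by
    intro n
    induction n with
    | zero => simp [Matrix.one_fin_two]
    | succ n ih =>
      rw [pow_succ, Matrix.SpecialLinearGroup.coe_mul, ih, hu]
      show (!![1, (n : ZMod p); 0, 1] : Matrix (Fin 2) (Fin 2) (ZMod p)) * !![1,1;0,1] = _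
      rw [mul_unipotent, Nat.cast_succ]
  have hup : u ^ p = 1 := by
    apply Subtype.ext
    rw [hpow p, ZMod.natCast_self, Matrix.SpecialLinearGroup.coe_one, Matrix.one_fin_two]
  refine ⟨QuotientGroup.mk' (Subgroup.center SL2) u, ?_⟩
  apply orderOf_eq_prime
  · rw [← map_pow, hup, _root_.map_one]
  · intro hcon
    rw [QuotientGroup.mk'_apply, QuotientGroup.eq_one_iff] at hcon
    obtain ⟨r, _, hr⟩ := Matrix.SpecialLinearGroup.mem_center_iff.mp hcon
    have h01 := congrFun (congrFun hr 0) 1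
    rw [Matrix.scalar_apply, Matrix.diagonal_apply_ne _ (by norm_num)] at h01
    have hu01 : (u : Matrix (Fin 2) (Fin 2) (ZMod p)) 0 1 = 1 := by
      rw [hu]
      norm_num
    rw [hu01] at h01
    exact one_ne_zero h01.symm

/-! ### An element of order `p - 1` -/

/-- The underlying map of the diagonal embedding of `𝔽ₚˣ` into `SL₂(𝔽ₚ)`. -/
def Dfun (u : (ZMod p)ˣ) : SL2 :=
  ⟨!![(u : ZMod p), 0; 0, ((u⁻¹ : (ZMod p)ˣ) : ZMod p)], by
    rw [det_diag2, ← Units.val_mul, mul_inv_cancel, Units.val_one]⟩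

/-- The diagonal embedding of `𝔽ₚˣ` into `SL₂(𝔽ₚ)`. -/
def Dhom : (ZMod p)ˣ →* SL2 :=
  MonoidHom.mk' (Dfun p) (by
    intro u v
    apply Subtype.ext
    rw [Matrix.SpecialLinearGroup.coe_mul]
    show (!![((u * v : (ZMod p)ˣ) : ZMod p), 0; 0, (((u * v)⁻¹ : (ZMod p)ˣ) : ZMod p)] :
        Matrix (Fin 2) (Fin 2) (ZMod p)) = _
    have h1 : ((u * v : (ZMod p)ˣ) : ZMod p) = (u : ZMod p) * (v : ZMod p) := Units.val_mul u v
    have h2 : (((u * v)⁻¹ : (ZMod p)ˣ) : ZMod p) =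
        ((u⁻¹ : (ZMod p)ˣ) : ZMod p) * ((v⁻¹ : (ZMod p)ˣ) : ZMod p) := by
      rw [mul_inv, Units.val_mul]
    show _ = (!![(u : ZMod p), 0; 0, ((u⁻¹ : (ZMod p)ˣ) : ZMod p)] :
        Matrix (Fin 2) (Fin 2) (ZMod p)) * !![(v : ZMod p), 0; 0, ((v⁻¹ : (ZMod p)ˣ) : ZMod p)]
    rw [mul_diag2, h1, h2])

lemma Dhom_injective : Function.Injective (Dhom p) := by
  intro u v h
  have h00 := congrFun (congrFun (congrArg
    (fun A : SL2 => (A : Matrix (Fin 2) (Fin 2) (ZMod p))) h) 0) 0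
  apply Units.ext
  show (u : ZMod p) = (v : ZMod p)
  have e1 : (Dhom p u : Matrix (Fin 2) (Fin 2) (ZMod p)) 0 0 = (u : ZMod p) := by
    show (!![(u : ZMod p), 0; 0, ((u⁻¹ : (ZMod p)ˣ) : ZMod p)] :
      Matrix (Fin 2) (Fin 2) (ZMod p)) 0 0 = _
    rfl
  have e2 : (Dhom p v : Matrix (Fin 2) (Fin 2) (ZMod p)) 0 0 = (v : ZMod p) := by
    show (!![(v : ZMod p), 0; 0, ((v⁻¹ : (ZMod p)ˣ) : ZMod p)] :
      Matrix (Fin 2) (Fin 2) (ZMod p)) 0 0 = _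
    rfl
  rw [← e1, ← e2]
  exact h00

lemma exists_SL2_orderOf_sub_one : ∃ x : SL2, orderOf x = p - 1 := by
  obtain ⟨g, hg⟩ := IsCyclic.exists_generator (α := (ZMod p)ˣ)
  refine ⟨Dhom p g, ?_⟩
  rw [orderOf_injective (Dhom p) (Dhom_injective p) g,
    orderOf_eq_card_of_forall_mem_zpowers hg, Nat.card_eq_fintype_card,
    ZMod.card_units_eq_totient, Nat.totient_prime Fact.out]

/-! ### An element of order `p + 1` -/

lemma exists_SL2_orderOf_add_one : ∃ x : SL2, orderOf x = p + 1 := by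
  have hp2 : 2 ≤ p := (Fact.out : p.Prime).two_le
  set F := GaloisField p 2 with hF
  have hcard : Nat.card F = p ^ 2 := GaloisField.card p 2 (by norm_num : (2:ℕ) ≠ 0)
  let b : Module.Basis (Fin 2) (ZMod p) F :=
    Module.finBasisOfFinrankEq (ZMod p) F (GaloisField.finrank p (n := 2) (by norm_num))
  set φ := Algebra.leftMulMatrix b with hφ
  have hφinj : Function.Injective φ := φ.toRingHom.injective
  obtain ⟨g, hg⟩ := IsCyclic.exists_generator (α := Fˣ)
  have hordg : orderOf g = p ^ 2 - 1 := by
    rw [orderOf_eq_card_of_forall_mem_zpowers hg, Nat.card_units, hcard]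
  have hfact : p ^ 2 - 1 = (p - 1) * (p + 1) := by
    obtain ⟨q, rfl⟩ : ∃ q, p = q + 1 := ⟨p - 1, by omega⟩
    have e1 : (q + 1) ^ 2 = q * q + 2 * q + 1 := by ring
    have e2 : (q + 1 - 1) * (q + 1 + 1) = q * q + 2 * q := by
      rw [Nat.succ_sub_one]
      ring
    rw [e1, e2]
    omega
  set h0 : F := (g : F) ^ (p - 1) with hh0
  have hordh : orderOf h0 = p + 1 := by
    rw [hh0, orderOf_pow' _ (by omega : p - 1 ≠ 0), orderOf_units, hordg]
    have hdvd : (p - 1) ∣ (p ^ 2 - 1) := ⟨p + 1, hfact⟩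
    rw [Nat.gcd_eq_right hdvd, hfact, Nat.mul_div_cancel_left _ (by omega : 0 < p - 1)]
  have hdetg : (φ (g : F)).det ≠ 0 := by
    have hmul : (φ (g : F)) * (φ ((g⁻¹ : Fˣ) : F)) = 1 := by
      rw [← _root_.map_mul, ← Units.val_mul, mul_inv_cancel, Units.val_one, _root_.map_one]
    intro hzero
    have hdet1 := congrArg Matrix.det hmul
    rw [Matrix.det_mul, hzero, zero_mul, Matrix.det_one] at hdet1
    exact one_ne_zero hdet1.symm
  have hdet : (φ h0).det = 1 := by
    rw [hh0, map_pow, Matrix.det_pow, ZMod.pow_card_sub_one_eq_one hdetg]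
  refine ⟨⟨φ h0, hdet⟩, ?_⟩
  rw [← hordh]
  apply orderOf_eq_orderOf_iff.mpr
  intro n
  refine Subtype.ext_iff.trans ?_
  show (φ h0) ^ n = 1 ↔ _
  rw [← map_pow]
  constructor
  · intro h
    apply hφinj
    rw [h, _root_.map_one]
  · intro h
    rw [h, _root_.map_one]

/-! ### A generic order-of-power lemma -/

lemma orderOf_pow_div {G : Type*} [Group G] {x : G} {d : ℕ} (hx : orderOf x ≠ 0)
    (hd : d ∣ orderOf x) (hd0 : d ≠ 0) : orderOf (x ^ (orderOf x / d)) = d := by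
  have hne : orderOf x / d ≠ 0 := by
    intro h
    have h2 := Nat.div_mul_cancel hd
    rw [h, zero_mul] at h2
    exact hx h2.symm
  rw [orderOf_pow' x hne, Nat.gcd_eq_right (Nat.div_dvd_of_dvd hd), Nat.div_div_self hd hx]

/-! ### The key existence lemma -/

lemma exists_orderOf_eq (k : ℕ) [Fact k.Prime] (hp : Odd p) (hk : Odd k)
    (hdvd : k ∣ Nat.card (PSL p)) :
    ∃ g : PSL p, orderOf g = k ^ (Nat.card (PSL p)).factorization k := by
  have hp2 : 2 ≤ p := (Fact.out : p.Prime).two_le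
  have hk2 : 2 ≤ k := (Fact.out : k.Prime).two_le
  have hkodd : k % 2 = 1 := Nat.odd_iff.mp hk
  set a := (Nat.card (PSL p)).factorization k with ha
  have hcard0 : Nat.card (PSL p) ≠ 0 := Nat.card_pos.ne'
  have ha1 : 1 ≤ a := (Fact.out : k.Prime).factorization_pos_of_dvd hcard0 hdvd
  have hka : k ^ a ∣ Nat.card (PSL p) := Nat.ordProj_dvd _ _
  have hka' : k ^ a ∣ p * (p ^ 2 - 1) := hka.trans (card_PSL_dvd p)
  have hfact : p ^ 2 - 1 = (p - 1) * (p + 1) := by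
    obtain ⟨q, rfl⟩ : ∃ q, p = q + 1 := ⟨p - 1, by omega⟩
    have e1 : (q + 1) ^ 2 = q * q + 2 * q + 1 := by ring
    have e2 : (q + 1 - 1) * (q + 1 + 1) = q * q + 2 * q := by
      rw [Nat.succ_sub_one]
      ring
    rw [e1, e2]
    omega
  by_cases hkp : k = p
  · -- k = p : the factorization is 1, use the unipotent element.
    subst hkp
    have hk_sq : k ∣ k ^ 2 := dvd_pow_self k two_ne_zero
    have hnd : ¬ k ∣ (k ^ 2 - 1) := by
      intro h
      have heq : k ^ 2 - (k ^ 2 - 1) = 1 := by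
        have h4 : 4 ≤ k ^ 2 := by nlinarith
        omega
      have h1 := Nat.dvd_sub hk_sq h
      rw [heq] at h1
      have := Nat.le_of_dvd one_pos h1
      omega
    have hcop : Nat.Coprime (k ^ a) (k ^ 2 - 1) :=
      Nat.Coprime.pow_left a ((Fact.out : k.Prime).coprime_iff_not_dvd.mpr hnd)
    have hka_p : k ^ a ∣ k := hcop.dvd_of_dvd_mul_right hka'
    have ha_eq : a = 1 := by
      have hd : k ^ a ∣ k ^ 1 := by rw [pow_one]; exact hka_p
      have := (Nat.pow_dvd_pow_iff_le_right (by omega : 1 < k)).mp hd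
      omega
    obtain ⟨g, hgp⟩ := exists_orderOf_eq_p k hp
    refine ⟨g, ?_⟩
    rw [ha_eq, pow_one, hgp]
  · -- k ≠ p
    have hknp : ¬ k ∣ p := fun h =>
      hkp (((Nat.prime_dvd_prime_iff_eq Fact.out Fact.out).mp h))
    have hcop : Nat.Coprime (k ^ a) p :=
      Nat.Coprime.pow_left a ((Fact.out : k.Prime).coprime_iff_not_dvd.mpr hknp)
    have hka2 : k ^ a ∣ p ^ 2 - 1 := by
      rw [mul_comm] at hka'
      exact hcop.dvd_of_dvd_mul_right hka'
    rw [hfact] at hka2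
    by_cases hk1 : k ∣ p - 1
    · -- k ∣ p - 1
      have hnd : ¬ k ∣ p + 1 := by
        intro h
        have h2 : k ∣ 2 := by
          have hsub := Nat.dvd_sub h hk1
          have heq : p + 1 - (p - 1) = 2 := by omega
          rwa [heq] at hsub
        rcases (Nat.dvd_prime Nat.prime_two).mp h2 with h' | h' <;> omega
      have hcop2 : Nat.Coprime (k ^ a) (p + 1) :=
        Nat.Coprime.pow_left a ((Fact.out : k.Prime).coprime_iff_not_dvd.mpr hnd)
      have hfin : k ^ a ∣ p - 1 := hcop2.dvd_of_dvd_mul_right hka2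
      obtain ⟨x, hx⟩ := exists_SL2_orderOf_sub_one p
      have hx0 : orderOf x ≠ 0 := by rw [hx]; omega
      have hka0 : k ^ a ≠ 0 := by positivity
      set y := x ^ (orderOf x / k ^ a) with hy
      have hordy : orderOf y = k ^ a := orderOf_pow_div hx0 (hx ▸ hfin) hka0
      have hodd : Odd (orderOf y) := hordy ▸ hk.pow
      exact ⟨_, (orderOf_mk_of_odd p y hodd).trans hordy⟩
    · -- k ∣ p + 1
      have hcop2 : Nat.Coprime (k ^ a) (p - 1) :=
        Nat.Coprime.pow_left a ((Fact.out : k.Prime).coprime_iff_not_dvd.mpr hk1)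
      have hfin : k ^ a ∣ p + 1 := by
        rw [mul_comm] at hka2
        exact hcop2.dvd_of_dvd_mul_right hka2
      obtain ⟨x, hx⟩ := exists_SL2_orderOf_add_one p
      have hx0 : orderOf x ≠ 0 := by rw [hx]; omega
      have hka0 : k ^ a ≠ 0 := by positivity
      set y := x ^ (orderOf x / k ^ a) with hy
      have hordy : orderOf y = k ^ a := orderOf_pow_div hx0 (hx ▸ hfin) hka0
      have hodd : Odd (orderOf y) := hordy ▸ hk.pow
      exact ⟨_, (orderOf_mk_of_odd p y hodd).trans hordy⟩

/-! ### Uniqueness of subgroups of a given order in a cyclic group -/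

lemma subgroup_eq_of_card_eq {G : Type*} [Group G] [Fintype G] [IsCyclic G]
    {H K : Subgroup G} (h : Nat.card H = Nat.card K) : H = K := by
  classical
  set d := Nat.card K with hd
  have hd0 : 0 < d := Nat.card_pos
  set S : Finset G := Finset.univ.filter (fun x => x ^ d = 1) with hS
  have hSle : S.card ≤ d := IsCyclic.card_pow_eq_one_le hd0
  have key : ∀ (L : Subgroup G), Nat.card L = d → (L : Set G).toFinset = S := by
    intro L hL
    have hsub : (L : Set G).toFinset ⊆ S := by
      intro x hx
      rw [Set.mem_toFinset] at hx
      rw [hS, Finset.mem_filter]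
      refine ⟨Finset.mem_univ x, ?_⟩
      have h1 : (⟨x, hx⟩ : L) ^ d = 1 := by rw [← hL]; exact pow_card_eq_one'
      have h2 := congrArg (Subtype.val) h1
      simpa using h2
    have hcardL : ((L : Set G).toFinset).card = d := by
      rw [Set.toFinset_card, ← hL, Nat.card_eq_fintype_card]
      exact Fintype.card_congr (Equiv.refl _)
    exact Finset.eq_of_subset_of_card_le hsub (by omega)
  have h1 := key H h
  have h2 := key K rfl
  apply SetLike.ext'
  rw [← Set.coe_toFinset (H : Set G), ← Set.coe_toFinset (K : Set G), h1, h2]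

lemma eq_of_le_cyclic {G : Type*} [Group G] [Finite G] {Q H K : Subgroup G}
    (hQc : IsCyclic Q) (hH : H ≤ Q) (hK : K ≤ Q) (hcard : Nat.card H = Nat.card K) : H = K := by
  classical
  letI : Fintype Q := Fintype.ofFinite Q
  have h1 : (H.subgroupOf Q).map Q.subtype = H := by
    rw [Subgroup.subgroupOf_map_subtype, inf_eq_left.mpr hH]
  have h2 : (K.subgroupOf Q).map Q.subtype = K := by
    rw [Subgroup.subgroupOf_map_subtype, inf_eq_left.mpr hK]
  rw [← h1, ← h2]
  congr 1
  apply subgroup_eq_of_card_eq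
  rw [Nat.card_congr (Subgroup.subgroupOfEquivOfLe hH).toEquiv,
    Nat.card_congr (Subgroup.subgroupOfEquivOfLe hK).toEquiv]
  exact hcard

end Stmt11Aux

open Stmt11Aux Pointwise

theorem stmt11 (p k : ℕ) [Fact p.Prime] [Fact k.Prime] (hp : Odd p) (hk : Odd k)
    (hdvd : k ∣ Nat.card (PSL p)) :
    (∀ P : Sylow k (PSL p), IsCyclic ↥(P : Subgroup (PSL p))) ∧
      ∀ H K : Subgroup (PSL p), Nat.card H = k → Nat.card K = k →
        ∃ g : PSL p, Subgroup.map (MulAut.conj g).toMonoidHom H = K := by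
  obtain ⟨g, hg⟩ := exists_orderOf_eq p k hp hk hdvd
  set a := (Nat.card (PSL p)).factorization k with ha
  have hScard : Nat.card (Subgroup.zpowers g) = k ^ a := by
    rw [Nat.card_zpowers, hg]
  have hSp : IsPGroup k (Subgroup.zpowers g) := IsPGroup.of_card hScard
  obtain ⟨Q, hQ⟩ := hSp.exists_le_sylow
  have hQcard : Nat.card Q = k ^ a := Q.card_eq_multiplicity
  have hQeq : (Q : Subgroup (PSL p)) = Subgroup.zpowers g := by
    symm
    apply SetLike.ext'
    apply Set.eq_of_subset_of_ncard_le hQ _ (Set.toFinite _)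
    rw [← Nat.card_coe_set_eq, ← Nat.card_coe_set_eq]
    show Nat.card Q ≤ Nat.card (Subgroup.zpowers g)
    rw [hQcard, hScard]
  have hzcyc : IsCyclic ↥(Subgroup.zpowers g) := by
    refine ⟨⟨⟨g, Subgroup.mem_zpowers g⟩, ?_⟩⟩
    rintro ⟨x, hx⟩
    obtain ⟨n, hn⟩ := hx
    exact ⟨n, Subtype.ext (by simpa using hn)⟩
  have hQcyc : IsCyclic ↥(Q : Subgroup (PSL p)) := by
    rw [hQeq]
    exact hzcyc
  -- Every Sylow subgroup is cyclic
  have part1 : ∀ P : Sylow k (PSL p), IsCyclic ↥(P : Subgroup (PSL p)) := by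
    intro P
    obtain ⟨x, hx⟩ := MulAction.exists_smul_eq (PSL p) Q P
    rw [← hx]
    exact isCyclic_of_surjective (Q.equivSMul x).toMonoidHom (Q.equivSMul x).surjective
  refine ⟨part1, ?_⟩
  intro H K hH hK
  have hk1 : k = k ^ 1 := (pow_one k).symm
  have hHp : IsPGroup k H := IsPGroup.of_card (by rw [hH, ← hk1])
  have hKp : IsPGroup k K := IsPGroup.of_card (by rw [hK, ← hk1])
  obtain ⟨P₁, hP₁⟩ := hHp.exists_le_sylow
  obtain ⟨P₂, hP₂⟩ := hKp.exists_le_sylow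
  obtain ⟨x, hx⟩ := MulAction.exists_smul_eq (PSL p) P₁ P₂
  refine ⟨x, ?_⟩
  have hconj_inj : Function.Injective (MulAut.conj x).toMonoidHom := (MulAut.conj x).injective
  have hsmul : ((x • P₁ : Sylow k (PSL p)) : Subgroup (PSL p)) =
      Subgroup.map (MulAut.conj x).toMonoidHom P₁ := by
    rw [Sylow.coe_subgroup_smul, Subgroup.pointwise_smul_def]
    rfl
  have h1 : Subgroup.map (MulAut.conj x).toMonoidHom H ≤ (P₂ : Subgroup (PSL p)) := by
    rw [← hx, hsmul]
    exact Subgroup.map_mono hP₁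
  have hcard1 : Nat.card (Subgroup.map (MulAut.conj x).toMonoidHom H) = k := by
    rw [← Nat.card_congr (Subgroup.equivMapOfInjective H _ hconj_inj).toEquiv]
    exact hH
  exact eq_of_le_cyclic (part1 P₂) h1 hP₂ (hcard1.trans hK.symm)
end

section
/- Let p be an odd prime. The number of subgroups of order p in PSL_2(F_p) is p + 1. -/
set_option maxRecDepth 4000

open Matrix Subgroup

open Matrix Subgroup

section
variable (p : ℕ) [Fact p.Prime]

local notation "SL2" => Matrix.SpecialLinearGroup (Fin 2) (ZMod p)

lemma card_GL2 : Nat.card (GL (Fin 2) (ZMod p)) = (p^2 - 1) * (p^2 - p) := by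
  rw [Matrix.card_GL_field, Fin.prod_univ_two, ZMod.card]
  norm_num

lemma diagmul (a b : ZMod p) : !![a, 0; 0, 1] * !![b, 0; 0, 1] = !![a*b, 0; 0, 1] := by
  rw [Matrix.mul_fin_two]
  congr 1 <;> ring

lemma det_GL2_surjective :
    Function.Surjective (Matrix.GeneralLinearGroup.det : GL (Fin 2) (ZMod p) →* (ZMod p)ˣ) := by
  intro u
  refine ⟨⟨!![(u : ZMod p), 0; 0, 1], !![((u⁻¹ : (ZMod p)ˣ) : ZMod p), 0; 0, 1], ?_, ?_⟩, ?_⟩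
  · rw [diagmul, Units.mul_inv, Matrix.one_fin_two]
  · rw [diagmul, Units.inv_mul, Matrix.one_fin_two]
  · ext
    rw [Matrix.GeneralLinearGroup.val_det_apply]
    rw [Matrix.det_fin_two_of]
    ring

end
section
variable (p : ℕ) [Fact p.Prime]

local notation "SL2" => Matrix.SpecialLinearGroup (Fin 2) (ZMod p)

noncomputable def eKer : SL2 ≃
    (MonoidHom.ker (Matrix.GeneralLinearGroup.det : GL (Fin 2) (ZMod p) →* (ZMod p)ˣ)) where
  toFun s := ⟨Matrix.SpecialLinearGroup.toGL s, by
    rw [MonoidHom.mem_ker]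
    ext
    rw [Matrix.GeneralLinearGroup.val_det_apply]
    exact s.2⟩
  invFun g := ⟨((g : GL (Fin 2) (ZMod p)) : Matrix (Fin 2) (Fin 2) (ZMod p)), by
    have h := g.2
    rw [MonoidHom.mem_ker] at h
    have := congrArg Units.val h
    rwa [Matrix.GeneralLinearGroup.val_det_apply] at this⟩
  left_inv s := rfl
  right_inv g := Subtype.ext (Units.ext rfl)

lemma card_SL2 : Nat.card SL2 = (p^2 - 1) * p := by
  have hp2 : 2 ≤ p := (Fact.out (p := p.Prime)).two_le
  have h1 := Subgroup.card_eq_card_quotient_mul_card_subgroup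
    (MonoidHom.ker (Matrix.GeneralLinearGroup.det : GL (Fin 2) (ZMod p) →* (ZMod p)ˣ))
  rw [card_GL2] at h1
  have h2 : Nat.card (GL (Fin 2) (ZMod p) ⧸ MonoidHom.ker
      (Matrix.GeneralLinearGroup.det : GL (Fin 2) (ZMod p) →* (ZMod p)ˣ)) = p - 1 := by
    rw [Nat.card_congr (QuotientGroup.quotientKerEquivOfSurjective _
      (det_GL2_surjective p)).toEquiv, Nat.card_eq_fintype_card, ZMod.card_units_eq_totient,
      Nat.totient_prime Fact.out]
  rw [h2, ← Nat.card_congr (eKer p)] at h1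
  have hkey : (p^2 - 1) * (p^2 - p) = ((p^2-1) * p) * (p-1) := by
    have : p^2 - p = p * (p-1) := by
      rw [Nat.mul_sub, mul_one, pow_two]
    rw [this]; ring
  rw [hkey] at h1
  exact Nat.eq_of_mul_eq_mul_left (show 0 < p - 1 by omega) (h1.symm.trans (mul_comm _ _))

end


section
variable (p : ℕ) [Fact p.Prime] (hp : Odd p)

local notation "SL2" => Matrix.SpecialLinearGroup (Fin 2) (ZMod p)

def zee : SL2 := ⟨(-1 : Matrix (Fin 2) (Fin 2) (ZMod p)), by
  rw [Matrix.det_neg]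
  simp⟩

include hp

lemma neg_one_ne_one' : (-1 : ZMod p) ≠ 1 := by
  have h3 : 3 ≤ p := by
    rcases hp with ⟨k, hk⟩
    have := (Fact.out (p := p.Prime)).two_le
    omega
  haveI : Fact (2 < p) := ⟨by omega⟩
  exact ZMod.neg_one_ne_one

lemma zee_ne_one : zee p ≠ 1 := by
  intro h
  have := congrArg (fun A : SL2 => (A : Matrix (Fin 2) (Fin 2) (ZMod p)) 0 0) h
  simp [zee] at this
  exact neg_one_ne_one' p hp (by simpa using this)

lemma orderOf_zee : orderOf (zee p) = 2 := by
  refine orderOf_eq_prime ?_ (zee_ne_one p hp)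
  apply Subtype.ext
  rw [Matrix.SpecialLinearGroup.coe_pow]
  simp [zee]

lemma center_eq : center SL2 = Subgroup.zpowers (zee p) := by
  ext A
  constructor
  · intro hA
    obtain ⟨r, hr1, hr2⟩ := Matrix.SpecialLinearGroup.mem_center_iff.mp hA
    rw [Fintype.card_fin] at hr1
    rcases mul_self_eq_one_iff.mp (show r * r = 1 by rw [← pow_two]; exact hr1) with h | h
    · subst h
      have : A = 1 := by
        apply Subtype.ext
        rw [← hr2]
        simp
      rw [this]; exact Subgroup.one_mem _
    · subst h
      have : A = zee p := by
        apply Subtype.ext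
        rw [← hr2, Matrix.scalar_apply]
        show _ = (-1 : Matrix (Fin 2) (Fin 2) (ZMod p))
        ext i j
        fin_cases i <;> fin_cases j <;> simp [Matrix.diagonal]
      rw [this]; exact Subgroup.mem_zpowers _
  · intro hA
    have hz : zee p ∈ center SL2 := by
      rw [Matrix.SpecialLinearGroup.mem_center_iff]
      refine ⟨-1, by simp, ?_⟩
      rw [Matrix.scalar_apply]
      show _ = (-1 : Matrix (Fin 2) (Fin 2) (ZMod p))
      ext i j
      fin_cases i <;> fin_cases j <;> simp [Matrix.diagonal]
    obtain ⟨k, hk⟩ := hA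
    rw [← hk]
    exact Subgroup.zpow_mem _ hz _

lemma card_center : Nat.card (center SL2) = 2 := by
  rw [center_eq p hp, Nat.card_zpowers, orderOf_zee p hp]

end



section
variable (p : ℕ) [Fact p.Prime]

local notation "SL2" => Matrix.SpecialLinearGroup (Fin 2) (ZMod p)

def uu : SL2 := ⟨!![1, 1; 0, 1], by rw [Matrix.det_fin_two_of]; ring⟩
def ll : SL2 := ⟨!![1, 0; 1, 1], by rw [Matrix.det_fin_two_of]; ring⟩

lemma uu_pow (k : ℕ) : ((uu p ^ k : SL2) : Matrix (Fin 2) (Fin 2) (ZMod p))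
    = !![1, (k : ZMod p); 0, 1] := by
  induction k with
  | zero => rw [pow_zero, Matrix.SpecialLinearGroup.coe_one, Matrix.one_fin_two]; norm_num
  | succ k ih =>
      rw [pow_succ, Matrix.SpecialLinearGroup.coe_mul, ih]
      show _ * (uu p).val = _
      rw [uu, Matrix.mul_fin_two]
      push_cast
      congr 1 <;> ring

lemma ll_pow (k : ℕ) : ((ll p ^ k : SL2) : Matrix (Fin 2) (Fin 2) (ZMod p))
    = !![1, 0; (k : ZMod p), 1] := by
  induction k with
  | zero => rw [pow_zero, Matrix.SpecialLinearGroup.coe_one, Matrix.one_fin_two]; norm_num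
  | succ k ih =>
      rw [pow_succ, Matrix.SpecialLinearGroup.coe_mul, ih]
      show _ * (ll p).val = _
      rw [ll, Matrix.mul_fin_two]
      push_cast
      congr 1 <;> ring

lemma uu_not_center : uu p ∉ center SL2 := by
  intro h
  obtain ⟨r, _, hr⟩ := Matrix.SpecialLinearGroup.mem_center_iff.mp h
  have := congrFun (congrFun hr 0) 1
  rw [Matrix.scalar_apply, Matrix.diagonal_apply_ne _ (by decide)] at this
  simp [uu] at this

lemma ll_not_center : ll p ∉ center SL2 := by
  intro h
  obtain ⟨r, _, hr⟩ := Matrix.SpecialLinearGroup.mem_center_iff.mp h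
  have := congrFun (congrFun hr 1) 0
  rw [Matrix.scalar_apply, Matrix.diagonal_apply_ne _ (by decide)] at this
  simp [ll] at this

lemma orderOf_uu_bar : orderOf ((uu p : SL2) : PSL p) = p := by
  refine orderOf_eq_prime ?_ ?_
  · rw [← QuotientGroup.mk_pow]
    rw [QuotientGroup.eq_one_iff]
    have : uu p ^ p = 1 := by
      apply Subtype.ext
      rw [uu_pow, ZMod.natCast_self, Matrix.SpecialLinearGroup.coe_one, Matrix.one_fin_two]
    rw [this]
    exact Subgroup.one_mem _
  · intro h
    exact uu_not_center p ((QuotientGroup.eq_one_iff _).mp h)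

lemma orderOf_ll_bar : orderOf ((ll p : SL2) : PSL p) = p := by
  refine orderOf_eq_prime ?_ ?_
  · rw [← QuotientGroup.mk_pow]
    rw [QuotientGroup.eq_one_iff]
    have : ll p ^ p = 1 := by
      apply Subtype.ext
      rw [ll_pow, ZMod.natCast_self, Matrix.SpecialLinearGroup.coe_one, Matrix.one_fin_two]
    rw [this]
    exact Subgroup.one_mem _
  · intro h
    exact ll_not_center p ((QuotientGroup.eq_one_iff _).mp h)

lemma zpowers_ne : Subgroup.zpowers ((uu p : SL2) : PSL p) ≠
    Subgroup.zpowers ((ll p : SL2) : PSL p) := by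
  intro h
  have hmem : ((ll p : SL2) : PSL p) ∈ Subgroup.zpowers ((uu p : SL2) : PSL p) := by
    rw [h]; exact Subgroup.mem_zpowers _
  rw [← mem_powers_iff_mem_zpowers] at hmem
  obtain ⟨k, hk⟩ := (Submonoid.mem_powers_iff _ _).mp hmem
  rw [← QuotientGroup.mk_pow] at hk
  have hc : (uu p ^ k)⁻¹ * ll p ∈ center SL2 := QuotientGroup.eq.mp hk
  obtain ⟨r, _, hr⟩ := Matrix.SpecialLinearGroup.mem_center_iff.mp hc
  have hmul : ((uu p ^ k : SL2) : Matrix (Fin 2) (Fin 2) (ZMod p)) * Matrix.scalar (Fin 2) r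
      = ((ll p : SL2) : Matrix (Fin 2) (Fin 2) (ZMod p)) := by
    rw [hr, ← Matrix.SpecialLinearGroup.coe_mul, mul_inv_cancel_left]
  rw [Matrix.scalar_apply] at hmul
  have hent := congrFun (congrFun hmul 1) 0
  rw [Matrix.mul_diagonal, uu_pow] at hent
  simp [ll] at hent

end

lemma arith_aux (p n m : ℕ) (hp2 : 2 ≤ p) (hm : p^2 - 1 = 2*m) (hd : n ∣ m)
    (hmod : n % p = 1) (hne : n ≠ 1) : n = p + 1 := by
  have hd' : n ∣ p^2 - 1 := hm ▸ hd.mul_left 2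
  have hp4 : 4 ≤ p^2 := by nlinarith
  have hpos : 0 < p^2 - 1 := by omega
  have hle : n ≤ p^2 - 1 := Nat.le_of_dvd hpos hd'
  have hn1 : 1 ≤ n := by
    rcases Nat.eq_zero_or_pos n with h | h
    · rw [h] at hmod; simp at hmod
    · exact h
  obtain ⟨k, hk⟩ : ∃ k, n = p * k + 1 := by
    refine ⟨n / p, ?_⟩
    have := Nat.div_add_mod n p
    omega
  have hk1 : 1 ≤ k := by
    rcases Nat.eq_zero_or_pos k with h | h
    · exfalso; apply hne; rw [hk, h, Nat.mul_zero]
    · exact h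
  have hkp : k < p := by
    by_contra hh
    push_neg at hh
    have : p * p ≤ p * k := Nat.mul_le_mul_left p hh
    have hp2' : p * p = p ^ 2 := (sq p).symm
    omega
  -- integer divisibility
  have hdZ : (n : ℤ) ∣ (p : ℤ)^2 - 1 := by
    have := Int.natCast_dvd_natCast.mpr hd'
    rwa [Nat.cast_sub (by nlinarith), Nat.cast_pow, Nat.cast_one] at this
  have hdk : (n : ℤ) ∣ (k : ℤ)^2 - 1 := by
    have h1 : (n : ℤ) ∣ ((k:ℤ)*(p:ℤ) - 1) * ((k:ℤ)*(p:ℤ) + 1) := by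
      refine Dvd.dvd.mul_left ?_ _
      have : (n : ℤ) = (k:ℤ)*(p:ℤ) + 1 := by push_cast [hk]; ring
      rw [this]
    have h2 : (k : ℤ)^2 - 1 = ((k:ℤ)*(p:ℤ) - 1) * ((k:ℤ)*(p:ℤ) + 1) - (k:ℤ)^2 * ((p:ℤ)^2 - 1) := by
      ring
    rw [h2]
    exact dvd_sub h1 (hdZ.mul_left _)
  rcases eq_or_lt_of_le hk1 with h1 | h2
  · rw [hk, ← h1, mul_one, Nat.add_comm]
  · exfalso
    have hkpos : (0 : ℤ) < (k:ℤ)^2 - 1 := by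
      have : (2 : ℤ) ≤ (k : ℤ) := by exact_mod_cast h2
      nlinarith
    have := Int.le_of_dvd hkpos hdk
    have hn : (n : ℤ) = (k:ℤ)*(p:ℤ) + 1 := by push_cast [hk]; ring
    rw [hn] at this
    have hcontr : (k:ℤ) * (p:ℤ) < (k:ℤ) * (k:ℤ) := by nlinarith
    have : (p : ℤ) < (k : ℤ) := by
      have hk0 : (0:ℤ) < k := by exact_mod_cast hk1
      exact lt_of_mul_lt_mul_left (by linarith [hcontr]) (le_of_lt hk0)
    have : p < k := by exact_mod_cast this
    omega

section
variable (p : ℕ) [Fact p.Prime]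

local notation "SL2" => Matrix.SpecialLinearGroup (Fin 2) (ZMod p)

lemma card_PSL (hp : Odd p) (m : ℕ) (hm : p^2 - 1 = 2*m) :
    Nat.card (PSL p) = m * p := by
  have h1 := Subgroup.card_eq_card_quotient_mul_card_subgroup (center SL2)
  rw [card_SL2, card_center p hp, hm] at h1
  have h2 : Nat.card (PSL p) * 2 = (m * p) * 2 := by rw [← h1]; ring
  exact Nat.eq_of_mul_eq_mul_right (by norm_num) h2

lemma fact_one (hp : Odd p) (m : ℕ) (hm : p^2 - 1 = 2*m) :
    (Nat.card (PSL p)).factorization p = 1 := by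
  have hp2 := (Fact.out (p := p.Prime)).two_le
  have hp4 : 4 ≤ p^2 := by nlinarith
  have hm0 : m ≠ 0 := by omega
  have hpm : ¬ p ∣ m := by
    intro h
    have h2 : p ∣ p^2 - 1 := hm ▸ h.mul_left 2
    have h3 : p ∣ p^2 := dvd_pow_self p two_ne_zero
    have h4 : p^2 - (p^2 - 1) = 1 := by omega
    have h5 : p ∣ 1 := by rw [← h4]; exact Nat.dvd_sub h3 h2
    have := Nat.le_of_dvd one_pos h5
    omega
  rw [card_PSL p hp m hm, Nat.factorization_mul hm0 (by omega)]
  rw [Finsupp.add_apply, Nat.factorization_eq_zero_of_not_dvd hpm,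
    Nat.Prime.factorization_self Fact.out]

noncomputable def sylowEquiv (hf : (Nat.card (PSL p)).factorization p = 1) :
    {H : Subgroup (PSL p) // Nat.card H = p} ≃ Sylow p (PSL p) where
  toFun H := Sylow.ofCard (p := p) H.1 (by rw [hf, pow_one]; exact H.2)
  invFun P := ⟨P.1, by rw [Sylow.card_eq_multiplicity P, hf, pow_one]⟩
  left_inv H := Subtype.ext rfl
  right_inv P := Sylow.ext rfl

end

theorem stmt14 (p : ℕ) [Fact p.Prime] (hp : Odd p) :
    Nat.card {H : Subgroup (PSL p) // Nat.card H = p} = p + 1 := by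
  have hp2 := (Fact.out (p := p.Prime)).two_le
  have hp4 : 4 ≤ p^2 := by nlinarith
  obtain ⟨m, hm⟩ : ∃ m, p^2 - 1 = 2*m := by
    obtain ⟨t, ht⟩ := hp.pow (n := 2)
    exact ⟨t, by omega⟩
  have hf := fact_one p hp m hm
  rw [Nat.card_congr (sylowEquiv p hf)]
  have hmod : Nat.card (Sylow p (PSL p)) % p = 1 := by
    have h0 := card_sylow_modEq_one p (PSL p)
    unfold Nat.ModEq at h0
    have h1 : 1 % p = 1 := Nat.mod_eq_of_lt (by omega)
    rw [h1] at h0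
    exact h0
  obtain ⟨P⟩ : Nonempty (Sylow p (PSL p)) := inferInstance
  have hcardP : Nat.card P = p := by rw [Sylow.card_eq_multiplicity P, hf, pow_one]
  have hidx : (P : Subgroup (PSL p)).index = m := by
    have h1 := Subgroup.card_mul_index (P : Subgroup (PSL p))
    rw [hcardP, card_PSL p hp m hm] at h1
    exact Nat.eq_of_mul_eq_mul_left (by omega) (h1.trans (mul_comm m p))
  have hdvd : Nat.card (Sylow p (PSL p)) ∣ m := hidx ▸ P.card_dvd_index
  have hne : Nat.card (Sylow p (PSL p)) ≠ 1 := by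
    have hcu : Nat.card (Subgroup.zpowers ((uu p : Matrix.SpecialLinearGroup (Fin 2) (ZMod p)) : PSL p)) = p := by
      rw [Nat.card_zpowers, orderOf_uu_bar]
    have hcl : Nat.card (Subgroup.zpowers ((ll p : Matrix.SpecialLinearGroup (Fin 2) (ZMod p)) : PSL p)) = p := by
      rw [Nat.card_zpowers, orderOf_ll_bar]
    have hne2 : (⟨_, hcu⟩ : {H : Subgroup (PSL p) // Nat.card H = p}) ≠ ⟨_, hcl⟩ := by
      intro h
      exact zpowers_ne p (congrArg Subtype.val h)
    have : Nontrivial (Sylow p (PSL p)) :=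
      ⟨⟨sylowEquiv p hf ⟨_, hcu⟩, sylowEquiv p hf ⟨_, hcl⟩,
        fun h => hne2 ((sylowEquiv p hf).injective h)⟩⟩
    have h2 := Finite.one_lt_card_iff_nontrivial.mpr this
    omega
  exact arith_aux p _ m hp2 hm hdvd hmod hne
end
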